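/- Let p be an odd prime and θ a generator of F_p^*. The set A = {(x₁, x₂, x₃) ∈ Z_{p−1}³ : θ^{x₁} + θ^{x₂} + θ^{x₃} = 1, x₁, x₂, x₃ ≠ 0} contains no subset of the form L₁ + L₂ + L₃ with L₁, L₂, L₃ ⊆ Z_{p−1}³ each of cardinality 2. In particular F(Z_{p−1}³, L^{(3)}_{2,2,2}) ≥ (p−3)². -/

import Mathlib

open Pointwise

/-- `A ⊆ G` is `L^{(r)}_{ℓ₁,…,ℓ_r}`-free. -/
def LFree {G : Type*} [AddCommGroup G] [DecidableEq G] (r : ℕ) (ℓ : Fin r → ℕ)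
    (A : Set G) : Prop :=
  ∀ L : Fin r → Finset G, (∀ i, (L i).card = ℓ i) → ¬ ((↑(∑ i, L i) : Set G) ⊆ A)

/-- `F(G, L^{(r)}_{ℓ₁,…,ℓ_r})`: largest size of an `L^{(r)}_{ℓ₁,…,ℓ_r}`-free set
in the abelian group `G`. -/
noncomputable def Fgrp (G : Type*) [AddCommGroup G] [DecidableEq G]
    (r : ℕ) (ℓ : Fin r → ℕ) : ℕ :=
  sSup {k | ∃ A : Finset G, LFree r ℓ (A : Set G) ∧ A.card = k}

section AlgebraCore

variable {F : Type*} [Field F]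

set_option maxHeartbeats 1600000

lemma aux_minor (u1 u2 u3 x1 x2 x3 y1 y2 y3 z1 z2 z3 : F)
    (hu1 : u1 ≠ 0) (hu2 : u2 ≠ 0) (hu3 : u3 ≠ 0)
    (h0 : u1 + u2 + u3 = 1)
    (hx : u1*x1 + u2*x2 + u3*x3 = 0)
    (hy : u1*y1 + u2*y2 + u3*y3 = 0)
    (hz : u1*z1 + u2*z2 + u3*z3 = 0)
    (hxz : u1*x1*z1 + u2*x2*z2 + u3*x3*z3 = 0)
    (hyz : u1*y1*z1 + u2*y2*z2 + u3*y3*z3 = 0)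
    (hzz : ¬(z1 = 0 ∧ z2 = 0 ∧ z3 = 0))
    (hd : x1*y2 - x2*y1 ≠ 0) : False := by
  by_cases hD : (x2*y3 - x3*y2) - (x1*y3 - x3*y1) + (x1*y2 - x2*y1) = 0
  · apply hd
    linear_combination (-(x1*y2 - x2*y1))*h0 + (y2 - y1)*hx + (x1 - x2)*hy + u3*hD
  · apply hzz
    refine ⟨?_, ?_, ?_⟩
    · have h : ((x2*y3 - x3*y2) - (x1*y3 - x3*y1) + (x1*y2 - x2*y1)) * (u1*z1) = 0 := by
        linear_combination (x2*y3 - x3*y2)*hz + (y2 - y3)*hxz + (x3 - x2)*hyz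
      rcases mul_eq_zero.1 h with h | h
      · exact absurd h hD
      · exact (mul_eq_zero.1 h).resolve_left hu1
    · have h : ((x2*y3 - x3*y2) - (x1*y3 - x3*y1) + (x1*y2 - x2*y1)) * (u2*z2) = 0 := by
        linear_combination (x3*y1 - x1*y3)*hz + (y3 - y1)*hxz + (x1 - x3)*hyz
      rcases mul_eq_zero.1 h with h | h
      · exact absurd h hD
      · exact (mul_eq_zero.1 h).resolve_left hu2
    · have h : ((x2*y3 - x3*y2) - (x1*y3 - x3*y1) + (x1*y2 - x2*y1)) * (u3*z3) = 0 := by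
        linear_combination (x1*y2 - x2*y1)*hz + (y1 - y2)*hxz + (x2 - x1)*hyz
      rcases mul_eq_zero.1 h with h | h
      · exact absurd h hD
      · exact (mul_eq_zero.1 h).resolve_left hu3

lemma prop3 (u1 u2 u3 a1 a2 a3 b1 b2 b3 c1 c2 c3 : F)
    (hu1 : u1 ≠ 0) (hu2 : u2 ≠ 0) (hu3 : u3 ≠ 0)
    (h0 : u1 + u2 + u3 = 1)
    (ha : u1*a1 + u2*a2 + u3*a3 = 0)
    (hb : u1*b1 + u2*b2 + u3*b3 = 0)
    (hc : u1*c1 + u2*c2 + u3*c3 = 0)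
    (hac : u1*a1*c1 + u2*a2*c2 + u3*a3*c3 = 0)
    (hbc : u1*b1*c1 + u2*b2*c2 + u3*b3*c3 = 0)
    (hcc : ¬(c1 = 0 ∧ c2 = 0 ∧ c3 = 0)) :
    a1*b2 = a2*b1 ∧ a1*b3 = a3*b1 ∧ a2*b3 = a3*b2 := by
  refine ⟨?_, ?_, ?_⟩
  · by_contra h
    exact aux_minor u1 u2 u3 a1 a2 a3 b1 b2 b3 c1 c2 c3 hu1 hu2 hu3 h0 ha hb hc hac hbc hcc
      (sub_ne_zero.2 h)
  · by_contra h
    refine aux_minor u1 u3 u2 a1 a3 a2 b1 b3 b2 c1 c3 c2 hu1 hu3 hu2 (by linear_combination h0)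
      (by linear_combination ha) (by linear_combination hb) (by linear_combination hc)
      (by linear_combination hac) (by linear_combination hbc)
      (by tauto) (sub_ne_zero.2 h)
  · by_contra h
    refine aux_minor u2 u3 u1 a2 a3 a1 b2 b3 b1 c2 c3 c1 hu2 hu3 hu1 (by linear_combination h0)
      (by linear_combination ha) (by linear_combination hb) (by linear_combination hc)
      (by linear_combination hac) (by linear_combination hbc)
      (by tauto) (sub_ne_zero.2 h)

lemma endB (u1 u2 w1 w2 : F) (hu2 : u2 ≠ 0) (hw1 : w1 ≠ 0) (hw2 : w2 ≠ 0)
    (s1 : u1*w1 + u2*w2 = 0) (s2 : u1*w1^2 + u2*w2^2 = 0) : u1 + u2 = 0 := by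
  have h : u2*w2*(w1 - w2) = 0 := by linear_combination w1*s1 - s2
  have hw : w1 = w2 := by
    rcases mul_eq_zero.1 h with h | h
    · exact absurd ((mul_eq_zero.1 h).resolve_left hu2) hw2
    · exact sub_eq_zero.1 h
  have h2 : (u1 + u2)*w1 = 0 := by rw [hw] at s1 ⊢; linear_combination s1
  exact (mul_eq_zero.1 h2).resolve_right hw1

lemma endgame (u1 u2 u3 w1 w2 w3 : F)
    (hu1 : u1 ≠ 0) (hu2 : u2 ≠ 0) (hu3 : u3 ≠ 0)
    (hn1 : u1 ≠ 1) (hn2 : u2 ≠ 1) (hn3 : u3 ≠ 1)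
    (h0 : u1 + u2 + u3 = 1)
    (s1 : u1*w1 + u2*w2 + u3*w3 = 0)
    (s2 : u1*w1^2 + u2*w2^2 + u3*w3^2 = 0)
    (s3 : u1*w1^3 + u2*w2^3 + u3*w3^3 = 0)
    (hw : ¬(w1 = 0 ∧ w2 = 0 ∧ w3 = 0)) : False := by
  by_cases h1 : w1 = 0 <;> by_cases h2 : w2 = 0 <;> by_cases h3 : w3 = 0
  -- 000
  · exact hw ⟨h1, h2, h3⟩
  -- w3 ≠ 0 only
  · have : u3*w3 = 0 := by linear_combination s1 - u1*h1 - u2*h2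
    exact h3 ((mul_eq_zero.1 this).resolve_left hu3)
  -- w2 ≠ 0 only
  · have : u2*w2 = 0 := by linear_combination s1 - u1*h1 - u3*h3
    exact h2 ((mul_eq_zero.1 this).resolve_left hu2)
  -- w2, w3 ≠ 0 (w1 = 0)
  · have e1 : u2*w2 + u3*w3 = 0 := by linear_combination s1 - u1*h1
    have e2 : u2*w2^2 + u3*w3^2 = 0 := by linear_combination s2 - u1*w1*h1
    have := endB u2 u3 w2 w3 hu3 h2 h3 e1 e2
    exact hn1 (by linear_combination h0 - this)
  -- w1 ≠ 0 only
  · have : u1*w1 = 0 := by linear_combination s1 - u2*h2 - u3*h3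
    exact h1 ((mul_eq_zero.1 this).resolve_left hu1)
  -- w1, w3 ≠ 0
  · have e1 : u1*w1 + u3*w3 = 0 := by linear_combination s1 - u2*h2
    have e2 : u1*w1^2 + u3*w3^2 = 0 := by linear_combination s2 - u2*w2*h2
    have := endB u1 u3 w1 w3 hu3 h1 h3 e1 e2
    exact hn2 (by linear_combination h0 - this)
  -- w1, w2 ≠ 0
  · have e1 : u1*w1 + u2*w2 = 0 := by linear_combination s1 - u3*h3
    have e2 : u1*w1^2 + u2*w2^2 = 0 := by linear_combination s2 - u3*w3*h3
    have := endB u1 u2 w1 w2 hu2 h1 h2 e1 e2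
    exact hn3 (by linear_combination h0 - this)
  -- all nonzero
  · have t1 : u1*w1*((w1 - w2)*(w1 - w3)) = 0 := by
      linear_combination s3 - (w2 + w3)*s2 + w2*w3*s1
    have hall : w1 = w2 ∨ w1 = w3 := by
      rcases mul_eq_zero.1 t1 with h | h
      · exact absurd ((mul_eq_zero.1 h).resolve_left hu1) h1
      · rcases mul_eq_zero.1 h with h | h
        · exact Or.inl (sub_eq_zero.1 h)
        · exact Or.inr (sub_eq_zero.1 h)
    have heqall : w1 = w2 ∧ w1 = w3 := by
      rcases hall with h | h
      · refine ⟨h, ?_⟩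
        have : u3*w3*(w3 - w1) = 0 := by linear_combination s2 - w1*s1 + u2*w2*h
        rcases mul_eq_zero.1 this with h' | h'
        · exact absurd ((mul_eq_zero.1 h').resolve_left hu3) h3
        · exact (sub_eq_zero.1 h').symm
      · refine ⟨?_, h⟩
        have : u2*w2*(w2 - w1) = 0 := by linear_combination s2 - w1*s1 + u3*w3*h
        rcases mul_eq_zero.1 this with h' | h'
        · exact absurd ((mul_eq_zero.1 h').resolve_left hu2) h2
        · exact (sub_eq_zero.1 h').symm
    obtain ⟨e2, e3⟩ := heqall
    have : w1 = 0 := by linear_combination s1 - w1*h0 + u2*e2 + u3*e3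
    exact h1 this

lemma final (u1 u2 u3 a1 a2 a3 b1 b2 b3 c1 c2 c3 : F)
    (hu1 : u1 ≠ 0) (hu2 : u2 ≠ 0) (hu3 : u3 ≠ 0)
    (hn1 : u1 ≠ 1) (hn2 : u2 ≠ 1) (hn3 : u3 ≠ 1)
    (h0 : u1 + u2 + u3 = 1)
    (ha : u1*a1 + u2*a2 + u3*a3 = 0)
    (mab : u1*a1*b1 + u2*a2*b2 + u3*a3*b3 = 0)
    (mabc : u1*(a1*b1*c1) + u2*(a2*b2*c2) + u3*(a3*b3*c3) = 0)
    (pab1 : a1*b2 = a2*b1) (pab2 : a1*b3 = a3*b1)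
    (pac1 : a1*c2 = a2*c1) (pac2 : a1*c3 = a3*c1)
    (hbNZ : ¬(b1 = 0 ∧ b2 = 0 ∧ b3 = 0)) (hcNZ : ¬(c1 = 0 ∧ c2 = 0 ∧ c3 = 0))
    (ha1 : a1 ≠ 0) : False := by
  have hb1 : b1 ≠ 0 := by
    intro hb; apply hbNZ
    refine ⟨hb, ?_, ?_⟩
    · have h2 : a1*b2 = 0 := by rw [pab1, hb, mul_zero]
      exact (mul_eq_zero.1 h2).resolve_left ha1
    · have h2 : a1*b3 = 0 := by rw [pab2, hb, mul_zero]
      exact (mul_eq_zero.1 h2).resolve_left ha1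
  have hc1 : c1 ≠ 0 := by
    intro hc; apply hcNZ
    refine ⟨hc, ?_, ?_⟩
    · have h2 : a1*c2 = 0 := by rw [pac1, hc, mul_zero]
      exact (mul_eq_zero.1 h2).resolve_left ha1
    · have h2 : a1*c3 = 0 := by rw [pac2, hc, mul_zero]
      exact (mul_eq_zero.1 h2).resolve_left ha1
  have s2 : u1*a1^2 + u2*a2^2 + u3*a3^2 = 0 := by
    have h : b1*(u1*a1^2 + u2*a2^2 + u3*a3^2) = 0 := by
      linear_combination a1*mab - u2*a2*pab1 - u3*a3*pab2
    exact (mul_eq_zero.1 h).resolve_left hb1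
  have s3 : u1*a1^3 + u2*a2^3 + u3*a3^3 = 0 := by
    have h : (b1*c1)*(u1*a1^3 + u2*a2^3 + u3*a3^3) = 0 := by
      linear_combination a1^2*mabc - u2*a2*a2*b1*pac1 - u2*a2*a1*c2*pab1
        - u3*a3*a3*b1*pac2 - u3*a3*a1*c3*pab2
    exact (mul_eq_zero.1 h).resolve_left (mul_ne_zero hb1 hc1)
  exact endgame u1 u2 u3 a1 a2 a3 hu1 hu2 hu3 hn1 hn2 hn3 h0 ha s2 s3 (fun h => ha1 h.1)


lemma afterM (u1 u2 u3 a1 a2 a3 b1 b2 b3 c1 c2 c3 : F)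
    (hu1 : u1 ≠ 0) (hu2 : u2 ≠ 0) (hu3 : u3 ≠ 0)
    (hn1 : u1 ≠ 1) (hn2 : u2 ≠ 1) (hn3 : u3 ≠ 1)
    (h0 : u1 + u2 + u3 = 1)
    (m1 : u1*a1 + u2*a2 + u3*a3 = 0)
    (m2 : u1*b1 + u2*b2 + u3*b3 = 0)
    (m3 : u1*c1 + u2*c2 + u3*c3 = 0)
    (m12 : u1*a1*b1 + u2*a2*b2 + u3*a3*b3 = 0)
    (m13 : u1*a1*c1 + u2*a2*c2 + u3*a3*c3 = 0)
    (m23 : u1*b1*c1 + u2*b2*c2 + u3*b3*c3 = 0)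
    (m123 : u1*(a1*b1*c1) + u2*(a2*b2*c2) + u3*(a3*b3*c3) = 0)
    (hξ : ¬(a1 = 0 ∧ a2 = 0 ∧ a3 = 0))
    (hη : ¬(b1 = 0 ∧ b2 = 0 ∧ b3 = 0))
    (hζ : ¬(c1 = 0 ∧ c2 = 0 ∧ c3 = 0)) : False := by
  obtain ⟨pxy1, pxy2, pxy3⟩ := prop3 u1 u2 u3 a1 a2 a3 b1 b2 b3 c1 c2 c3
    hu1 hu2 hu3 h0 m1 m2 m3 m13 m23 hζ
  obtain ⟨pxz1, pxz2, pxz3⟩ := prop3 u1 u2 u3 a1 a2 a3 c1 c2 c3 b1 b2 b3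
    hu1 hu2 hu3 h0 m1 m3 m2 m12 (by linear_combination m23) hη
  have hcase : a1 ≠ 0 ∨ a2 ≠ 0 ∨ a3 ≠ 0 := by tauto
  rcases hcase with h | h | h
  · exact final u1 u2 u3 a1 a2 a3 b1 b2 b3 c1 c2 c3
      hu1 hu2 hu3 hn1 hn2 hn3 h0 m1 m12 m123 pxy1 pxy2 pxz1 pxz2 hη hζ h
  · exact final u2 u1 u3 a2 a1 a3 b2 b1 b3 c2 c1 c3
      hu2 hu1 hu3 hn2 hn1 hn3 (by linear_combination h0) (by linear_combination m1)
      (by linear_combination m12) (by linear_combination m123)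
      (by linear_combination -pxy1) (by linear_combination pxy3)
      (by linear_combination -pxz1) (by linear_combination pxz3)
      (by tauto) (by tauto) h
  · exact final u3 u1 u2 a3 a1 a2 b3 b1 b2 c3 c1 c2
      hu3 hu1 hu2 hn3 hn1 hn2 (by linear_combination h0) (by linear_combination m1)
      (by linear_combination m12) (by linear_combination m123)
      (by linear_combination -pxy2) (by linear_combination -pxy3)
      (by linear_combination -pxz2) (by linear_combination -pxz3)
      (by tauto) (by tauto) h

lemma core (u1 u2 u3 x1 x2 x3 y1 y2 y3 z1 z2 z3 : F)
    (hu1 : u1 ≠ 0) (hu2 : u2 ≠ 0) (hu3 : u3 ≠ 0)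
    (hn1 : u1 ≠ 1) (hn2 : u2 ≠ 1) (hn3 : u3 ≠ 1)
    (hxA : ¬(x1 = 1 ∧ x2 = 1 ∧ x3 = 1))
    (hyA : ¬(y1 = 1 ∧ y2 = 1 ∧ y3 = 1))
    (hzA : ¬(z1 = 1 ∧ z2 = 1 ∧ z3 = 1))
    (E000 : u1 + u2 + u3 = 1)
    (E100 : u1*x1 + u2*x2 + u3*x3 = 1)
    (E010 : u1*y1 + u2*y2 + u3*y3 = 1)
    (E001 : u1*z1 + u2*z2 + u3*z3 = 1)
    (E110 : u1*x1*y1 + u2*x2*y2 + u3*x3*y3 = 1)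
    (E101 : u1*x1*z1 + u2*x2*z2 + u3*x3*z3 = 1)
    (E011 : u1*y1*z1 + u2*y2*z2 + u3*y3*z3 = 1)
    (E111 : u1*x1*y1*z1 + u2*x2*y2*z2 + u3*x3*y3*z3 = 1) : False := by
  apply afterM u1 u2 u3 (x1-1) (x2-1) (x3-1) (y1-1) (y2-1) (y3-1) (z1-1) (z2-1) (z3-1)
    hu1 hu2 hu3 hn1 hn2 hn3 E000
  · linear_combination E100 - E000
  · linear_combination E010 - E000
  · linear_combination E001 - E000
  · linear_combination E110 - E100 - E010 + E000
  · linear_combination E101 - E100 - E001 + E000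
  · linear_combination E011 - E010 - E001 + E000
  · linear_combination E111 - E110 - E101 - E011 + E100 + E010 + E001 - E000
  · simp only [sub_eq_zero]; exact hxA
  · simp only [sub_eq_zero]; exact hyA
  · simp only [sub_eq_zero]; exact hzA

private lemma cancel1 (a b c d : F) (ha : a ≠ 0) : (a*b*c) * (d*a⁻¹) = d*b*c := by
  field_simp

private lemma cancel2 (a b c d e : F) (ha : a ≠ 0) (hb : b ≠ 0) :
    (a*b*c) * (d*a⁻¹) * (e*b⁻¹) = d*e*c := by
  field_simp

private lemma cancel2' (a b c d e : F) (ha : a ≠ 0) (hc : c ≠ 0) :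
    (a*b*c) * (d*a⁻¹) * (e*c⁻¹) = d*b*e := by
  field_simp

private lemma cancel2'' (a b c d e : F) (hb : b ≠ 0) (hc : c ≠ 0) :
    (a*b*c) * (d*b⁻¹) * (e*c⁻¹) = a*d*e := by
  field_simp

private lemma cancel3 (a b c d e f : F) (ha : a ≠ 0) (hb : b ≠ 0) (hc : c ≠ 0) :
    (a*b*c) * (d*a⁻¹) * (e*b⁻¹) * (f*c⁻¹) = d*e*f := by
  field_simp

private lemma cancel1' (a b c d : F) (hb : b ≠ 0) : (a*b*c) * (d*b⁻¹) = a*d*c := by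
  field_simp

private lemma cancel1'' (a b c d : F) (hc : c ≠ 0) : (a*b*c) * (d*c⁻¹) = a*b*d := by
  field_simp

lemma coreAB (p11 p12 p13 p21 p22 p23 p31 p32 p33
    q11 q12 q13 q21 q22 q23 q31 q32 q33 : F)
    (hp11 : p11 ≠ 0) (hp12 : p12 ≠ 0) (hp13 : p13 ≠ 0)
    (hp21 : p21 ≠ 0) (hp22 : p22 ≠ 0) (hp23 : p23 ≠ 0)
    (hp31 : p31 ≠ 0) (hp32 : p32 ≠ 0) (hp33 : p33 ≠ 0)
    (hn1 : p11*p21*p31 ≠ 1) (hn2 : p12*p22*p32 ≠ 1) (hn3 : p13*p23*p33 ≠ 1)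
    (hr1 : ¬(q11 = p11 ∧ q12 = p12 ∧ q13 = p13))
    (hr2 : ¬(q21 = p21 ∧ q22 = p22 ∧ q23 = p23))
    (hr3 : ¬(q31 = p31 ∧ q32 = p32 ∧ q33 = p33))
    (S000 : p11*p21*p31 + p12*p22*p32 + p13*p23*p33 = 1)
    (S100 : q11*p21*p31 + q12*p22*p32 + q13*p23*p33 = 1)
    (S010 : p11*q21*p31 + p12*q22*p32 + p13*q23*p33 = 1)
    (S001 : p11*p21*q31 + p12*p22*q32 + p13*p23*q33 = 1)
    (S110 : q11*q21*p31 + q12*q22*p32 + q13*q23*p33 = 1)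
    (S101 : q11*p21*q31 + q12*p22*q32 + q13*p23*q33 = 1)
    (S011 : p11*q21*q31 + p12*q22*q32 + p13*q23*q33 = 1)
    (S111 : q11*q21*q31 + q12*q22*q32 + q13*q23*q33 = 1) : False := by
  have div_ne_one : ∀ a b : F, a ≠ 0 → b ≠ a → ¬ (b * a⁻¹ = 1) := by
    intro a b ha hba h
    exact hba (by field_simp at h; exact h)
  apply core (p11*p21*p31) (p12*p22*p32) (p13*p23*p33)
    (q11*p11⁻¹) (q12*p12⁻¹) (q13*p13⁻¹)
    (q21*p21⁻¹) (q22*p22⁻¹) (q23*p23⁻¹)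
    (q31*p31⁻¹) (q32*p32⁻¹) (q33*p33⁻¹)
    (mul_ne_zero (mul_ne_zero hp11 hp21) hp31) (mul_ne_zero (mul_ne_zero hp12 hp22) hp32)
    (mul_ne_zero (mul_ne_zero hp13 hp23) hp33) hn1 hn2 hn3
  · rintro ⟨h1, h2, h3⟩
    exact hr1 ⟨by field_simp at h1; exact h1, by field_simp at h2; exact h2,
      by field_simp at h3; exact h3⟩
  · rintro ⟨h1, h2, h3⟩
    exact hr2 ⟨by field_simp at h1; exact h1, by field_simp at h2; exact h2,
      by field_simp at h3; exact h3⟩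
  · rintro ⟨h1, h2, h3⟩
    exact hr3 ⟨by field_simp at h1; exact h1, by field_simp at h2; exact h2,
      by field_simp at h3; exact h3⟩
  · exact S000
  · rw [cancel1 _ _ _ _ hp11, cancel1 _ _ _ _ hp12, cancel1 _ _ _ _ hp13]; exact S100
  · rw [cancel1' _ _ _ _ hp21, cancel1' _ _ _ _ hp22, cancel1' _ _ _ _ hp23]; exact S010
  · rw [cancel1'' _ _ _ _ hp31, cancel1'' _ _ _ _ hp32, cancel1'' _ _ _ _ hp33]; exact S001
  · rw [cancel2 _ _ _ _ _ hp11 hp21, cancel2 _ _ _ _ _ hp12 hp22,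
      cancel2 _ _ _ _ _ hp13 hp23]; exact S110
  · rw [cancel2' _ _ _ _ _ hp11 hp31, cancel2' _ _ _ _ _ hp12 hp32,
      cancel2' _ _ _ _ _ hp13 hp33]; exact S101
  · rw [cancel2'' _ _ _ _ _ hp21 hp31, cancel2'' _ _ _ _ _ hp22 hp32,
      cancel2'' _ _ _ _ _ hp23 hp33]; exact S011
  · rw [cancel3 _ _ _ _ _ _ hp11 hp21 hp31, cancel3 _ _ _ _ _ _ hp12 hp22 hp32,
      cancel3 _ _ _ _ _ _ hp13 hp23 hp33]; exact S111

lemma lfreeA (p : ℕ) (hp : p.Prime) (hodd : Odd p) (θ : ZMod p)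
    (hθ : orderOf θ = p - 1) :
    LFree 3 (fun _ => 2)
      {x : ZMod (p - 1) × ZMod (p - 1) × ZMod (p - 1) |
        θ ^ x.1.val + θ ^ x.2.1.val + θ ^ x.2.2.val = 1 ∧
        x.1 ≠ 0 ∧ x.2.1 ≠ 0 ∧ x.2.2 ≠ 0} := by
  have hp3 : 3 ≤ p := by
    obtain ⟨k, hk⟩ := hodd; have := hp.two_le; omega
  haveI : NeZero (p - 1) := ⟨by omega⟩
  haveI := Fact.mk hp
  set e : ZMod (p-1) → ZMod p := fun t => θ ^ t.val with he
  have hθ0 : θ ≠ 0 := by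
    intro h
    have h1 : θ ^ (p - 1) = 1 := by rw [← hθ]; exact pow_orderOf_eq_one θ
    rw [h, zero_pow (by omega : p - 1 ≠ 0)] at h1
    exact zero_ne_one h1
  have he_ne : ∀ t, e t ≠ 0 := fun t => pow_ne_zero _ hθ0
  have key_mod : ∀ m : ℕ, θ ^ (m % (p - 1)) = θ ^ m := by
    intro m
    conv_lhs => rw [← hθ]
    exact pow_mod_orderOf θ m
  have he_mul : ∀ s t, e (s + t) = e s * e t := by
    intro s t
    show θ ^ (s + t).val = θ ^ s.val * θ ^ t.val
    rw [ZMod.val_add, key_mod, pow_add]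
  have he_one_iff : ∀ t, e t = 1 ↔ t = 0 := by
    intro t
    constructor
    · intro h
      have hd : orderOf θ ∣ t.val := orderOf_dvd_of_pow_eq_one h
      rw [hθ] at hd
      have hlt := ZMod.val_lt t
      have h0 : t.val = 0 := Nat.eq_zero_of_dvd_of_lt hd hlt
      exact (ZMod.val_eq_zero t).1 h0
    · intro h; rw [h]; show θ ^ (0 : ZMod (p-1)).val = 1; rw [ZMod.val_zero, pow_zero]
  have he_inj : Function.Injective e := by
    intro s t h
    have h2 : e (s - t) * e t = e s := by rw [← he_mul, sub_add_cancel]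
    rw [h] at h2
    have h3 : e (s - t) = 1 := by
      field_simp [he_ne t] at h2
      exact h2
    have := (he_one_iff _).1 h3
    exact sub_eq_zero.1 this
  intro L hL hsub
  obtain ⟨a0, b0, hab0, hL0⟩ := Finset.card_eq_two.1 (hL 0)
  obtain ⟨a1, b1, hab1, hL1⟩ := Finset.card_eq_two.1 (hL 1)
  obtain ⟨a2, b2, hab2, hL2⟩ := Finset.card_eq_two.1 (hL 2)
  have hmem : ∀ v0 v1 v2 : ZMod (p-1) × ZMod (p-1) × ZMod (p-1),
      v0 ∈ L 0 → v1 ∈ L 1 → v2 ∈ L 2 →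
      (e v0.1 * e v1.1 * e v2.1 + e v0.2.1 * e v1.2.1 * e v2.2.1
        + e v0.2.2 * e v1.2.2 * e v2.2.2 = 1) ∧
      ((v0 + v1 + v2).1 ≠ 0 ∧ (v0 + v1 + v2).2.1 ≠ 0 ∧ (v0 + v1 + v2).2.2 ≠ 0) := by
    intro v0 v1 v2 h0 h1 h2
    have hin : v0 + v1 + v2 ∈ (↑(∑ i, L i) : Set _) := by
      rw [Fin.sum_univ_three]
      exact_mod_cast Finset.add_mem_add (Finset.add_mem_add h0 h1) h2
    obtain ⟨hsum, hne⟩ := hsub hin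
    refine ⟨?_, hne⟩
    have e1 : e ((v0 + v1 + v2).1) = e v0.1 * e v1.1 * e v2.1 := by
      simp only [Prod.fst_add, he_mul]
    have e2 : e ((v0 + v1 + v2).2.1) = e v0.2.1 * e v1.2.1 * e v2.2.1 := by
      simp only [Prod.snd_add, Prod.fst_add, he_mul]
    have e3 : e ((v0 + v1 + v2).2.2) = e v0.2.2 * e v1.2.2 * e v2.2.2 := by
      simp only [Prod.snd_add, he_mul]
    rw [← e1, ← e2, ← e3]
    exact hsum
  have ha0 : a0 ∈ L 0 := by rw [hL0]; simp
  have hb0 : b0 ∈ L 0 := by rw [hL0]; simp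
  have ha1 : a1 ∈ L 1 := by rw [hL1]; simp
  have hb1 : b1 ∈ L 1 := by rw [hL1]; simp
  have ha2 : a2 ∈ L 2 := by rw [hL2]; simp
  have hb2 : b2 ∈ L 2 := by rw [hL2]; simp
  obtain ⟨S000, hnz1, hnz2, hnz3⟩ := hmem a0 a1 a2 ha0 ha1 ha2
  refine coreAB (e a0.1) (e a0.2.1) (e a0.2.2) (e a1.1) (e a1.2.1) (e a1.2.2)
    (e a2.1) (e a2.2.1) (e a2.2.2)
    (e b0.1) (e b0.2.1) (e b0.2.2) (e b1.1) (e b1.2.1) (e b1.2.2)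
    (e b2.1) (e b2.2.1) (e b2.2.2)
    (he_ne _) (he_ne _) (he_ne _) (he_ne _) (he_ne _) (he_ne _)
    (he_ne _) (he_ne _) (he_ne _)
    ?_ ?_ ?_ ?_ ?_ ?_
    S000 (hmem b0 a1 a2 hb0 ha1 ha2).1 (hmem a0 b1 a2 ha0 hb1 ha2).1
    (hmem a0 a1 b2 ha0 ha1 hb2).1 (hmem b0 b1 a2 hb0 hb1 ha2).1
    (hmem b0 a1 b2 hb0 ha1 hb2).1 (hmem a0 b1 b2 ha0 hb1 hb2).1
    (hmem b0 b1 b2 hb0 hb1 hb2).1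
  · intro h
    apply hnz1
    rw [Prod.fst_add, Prod.fst_add]
    rw [← he_mul, ← he_mul] at h
    exact (he_one_iff _).1 h
  · intro h
    apply hnz2
    rw [Prod.snd_add, Prod.snd_add, Prod.fst_add, Prod.fst_add]
    rw [← he_mul, ← he_mul] at h
    exact (he_one_iff _).1 h
  · intro h
    apply hnz3
    rw [Prod.snd_add, Prod.snd_add, Prod.snd_add, Prod.snd_add]
    rw [← he_mul, ← he_mul] at h
    exact (he_one_iff _).1 h
  · rintro ⟨h1, h2, h3⟩
    exact hab0 (Prod.ext (he_inj h1).symm (Prod.ext (he_inj h2).symm (he_inj h3).symm))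
  · rintro ⟨h1, h2, h3⟩
    exact hab1 (Prod.ext (he_inj h1).symm (Prod.ext (he_inj h2).symm (he_inj h3).symm))
  · rintro ⟨h1, h2, h3⟩
    exact hab2 (Prod.ext (he_inj h1).symm (Prod.ext (he_inj h2).symm (he_inj h3).symm))

end AlgebraCore

lemma part2 (p : ℕ) (hp : p.Prime) (hodd : Odd p) (θ : ZMod p)
    (hθ : orderOf θ = p - 1) :
    (p - 3) ^ 2 ≤ Fgrp (ZMod (p - 1) × ZMod (p - 1) × ZMod (p - 1)) 3 (fun _ => 2) := by
  classical
  have hp3 : 3 ≤ p := by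
    obtain ⟨k, hk⟩ := hodd; have := hp.two_le; omega
  haveI : NeZero (p - 1) := ⟨by omega⟩
  haveI : NeZero p := ⟨by omega⟩
  haveI := Fact.mk hp
  set e : ZMod (p-1) → ZMod p := fun t => θ ^ t.val with he
  have hθ0 : θ ≠ 0 := by
    intro h
    have h1 : θ ^ (p - 1) = 1 := by rw [← hθ]; exact pow_orderOf_eq_one θ
    rw [h, zero_pow (by omega : p - 1 ≠ 0)] at h1
    exact zero_ne_one h1
  have he_ne : ∀ t, e t ≠ 0 := fun t => pow_ne_zero _ hθ0
  have he_one_iff : ∀ t, e t = 1 ↔ t = 0 := by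
    intro t
    constructor
    · intro h
      have hd : orderOf θ ∣ t.val := orderOf_dvd_of_pow_eq_one h
      rw [hθ] at hd
      have hlt := ZMod.val_lt t
      have h0 : t.val = 0 := Nat.eq_zero_of_dvd_of_lt hd hlt
      exact (ZMod.val_eq_zero t).1 h0
    · intro h; rw [h]; show θ ^ (0 : ZMod (p-1)).val = 1; rw [ZMod.val_zero, pow_zero]
  have key_mod : ∀ m : ℕ, θ ^ (m % (p - 1)) = θ ^ m := by
    intro m
    conv_lhs => rw [← hθ]
    exact pow_mod_orderOf θ m
  have he_mul : ∀ s t, e (s + t) = e s * e t := by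
    intro s t
    show θ ^ (s + t).val = θ ^ s.val * θ ^ t.val
    rw [ZMod.val_add, key_mod, pow_add]
  have he_inj : Function.Injective e := by
    intro s t h
    have h2 : e (s - t) * e t = e s := by rw [← he_mul, sub_add_cancel]
    rw [h] at h2
    have h3 : e (s - t) = 1 := by
      field_simp [he_ne t] at h2
      exact h2
    exact sub_eq_zero.1 ((he_one_iff _).1 h3)
  -- surjectivity onto nonzero elements
  have hsurj : ∀ c : ZMod p, c ≠ 0 → ∃ t, e t = c := by
    intro c hc
    have hcard1 : Fintype.card {x : ZMod p // x ≠ 0} = p - 1 := by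
      have := Fintype.card_subtype_compl (fun x : ZMod p => x = 0)
      rw [Fintype.card_subtype_eq (0 : ZMod p), ZMod.card] at this
      exact this
    have hcard2 : Fintype.card (ZMod (p-1)) = p - 1 := ZMod.card _
    set E : ZMod (p-1) → {x : ZMod p // x ≠ 0} := fun t => ⟨e t, he_ne t⟩ with hE
    have hEinj : Function.Injective E := by
      intro s t h
      apply he_inj
      exact congrArg Subtype.val h
    have hEbij : Function.Bijective E :=
      (Fintype.bijective_iff_injective_and_card E).2 ⟨hEinj, by rw [hcard1, hcard2]⟩
    obtain ⟨t, ht⟩ := hEbij.2 ⟨c, hc⟩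
    exact ⟨t, congrArg Subtype.val ht⟩
  set l : ZMod p → ZMod (p-1) := fun c => if hc : c ≠ 0 then (hsurj c hc).choose else 0
    with hldef
  have hl : ∀ c : ZMod p, c ≠ 0 → e (l c) = c := by
    intro c hc
    simp only [hldef, dif_pos hc]
    exact (hsurj c hc).choose_spec
  -- the witness set
  set G := ZMod (p - 1) × ZMod (p - 1) × ZMod (p - 1)
  set S : Set G := {x : G |
      θ ^ x.1.val + θ ^ x.2.1.val + θ ^ x.2.2.val = 1 ∧
      x.1 ≠ 0 ∧ x.2.1 ≠ 0 ∧ x.2.2 ≠ 0} with hS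
  set AF : Finset G := Finset.univ.filter (fun x => x ∈ S) with hAF
  have hAFcoe : (↑AF : Set G) = S := by
    ext x; simp [hAF]
  -- counting
  set U2 : Finset (ZMod p) := Finset.univ \ {0, 1} with hU2
  have h01 : (0 : ZMod p) ≠ 1 := zero_ne_one
  have hm1 : (-1 : ZMod p) ≠ 0 := by
    intro h
    have : (1 : ZMod p) = 0 := by linear_combination -h
    exact one_ne_zero this
  have hm2 : (-1 : ZMod p) ≠ 1 := by
    intro h
    have h2 : (2 : ZMod p) = 0 := by linear_combination -h
    have := (ZMod.natCast_eq_zero_iff 2 p).1 (by exact_mod_cast h2)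
    have := Nat.le_of_dvd (by norm_num) this
    omega
  have hcardU2 : U2.card = p - 2 := by
    rw [hU2, Finset.card_sdiff_of_subset (Finset.subset_univ _), Finset.card_univ, ZMod.card]
    rw [Finset.card_insert_of_notMem (by simp [h01]), Finset.card_singleton]
  set U3 : Finset (ZMod p) := Finset.univ \ {0, 1, -1} with hU3
  have hcardU3 : U3.card = p - 3 := by
    rw [hU3, Finset.card_sdiff_of_subset (Finset.subset_univ _), Finset.card_univ, ZMod.card]
    rw [Finset.card_insert_of_notMem (by simp [h01, hm1.symm]),
      Finset.card_insert_of_notMem (by simp [hm2.symm]), Finset.card_singleton]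
  set R : Finset (ZMod p × ZMod p) := U2 ×ˢ U2 with hR
  have hcardR : R.card = (p - 2) ^ 2 := by
    rw [hR, Finset.card_product, hcardU2]; ring
  set B1 : Finset (ZMod p × ZMod p) := R.filter (fun q => q.1 + q.2 = 1) with hB1
  set B0 : Finset (ZMod p × ZMod p) := R.filter (fun q => q.1 + q.2 = 0) with hB0
  set T : Finset (ZMod p × ZMod p) :=
    R.filter (fun q => ¬(q.1 + q.2 = 0 ∨ q.1 + q.2 = 1)) with hT
  have hmemU2 : ∀ a : ZMod p, a ∈ U2 ↔ (a ≠ 0 ∧ a ≠ 1) := by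
    intro a; simp [hU2]
  have hB1card : B1.card = p - 2 := by
    have himg : B1 = U2.image (fun a => (a, 1 - a)) := by
      ext q
      simp only [hB1, Finset.mem_filter, hR, Finset.mem_product, Finset.mem_image]
      constructor
      · rintro ⟨⟨hq1, hq2⟩, hsum⟩
        exact ⟨q.1, hq1, by rw [show (1 : ZMod p) - q.1 = q.2 by linear_combination -hsum]⟩
      · rintro ⟨a, ha, rfl⟩
        rw [hmemU2] at ha
        refine ⟨⟨(hmemU2 a).2 ha, (hmemU2 _).2 ⟨?_, ?_⟩⟩, by ring⟩
        · intro h; exact ha.2 (by linear_combination -h)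
        · intro h; exact ha.1 (by linear_combination -h)
    rw [himg, Finset.card_image_of_injective _ (fun a b h => (Prod.ext_iff.1 h).1), hcardU2]
  have hB0card : B0.card = p - 3 := by
    have himg : B0 = U3.image (fun a => (a, -a)) := by
      ext q
      simp only [hB0, Finset.mem_filter, hR, Finset.mem_product, Finset.mem_image]
      constructor
      · rintro ⟨⟨hq1, hq2⟩, hsum⟩
        refine ⟨q.1, ?_, by rw [show -q.1 = q.2 by linear_combination -hsum]⟩
        rw [hmemU2] at hq1
        simp only [hU3, Finset.mem_sdiff, Finset.mem_univ, true_and, Finset.mem_insert,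
          Finset.mem_singleton]
        push_neg
        refine ⟨hq1.1, hq1.2, ?_⟩
        intro h
        rw [hmemU2] at hq2
        apply hq2.2
        rw [show q.2 = -q.1 by linear_combination hsum, h]; ring
      · rintro ⟨a, ha, rfl⟩
        simp only [hU3, Finset.mem_sdiff, Finset.mem_univ, true_and, Finset.mem_insert,
          Finset.mem_singleton] at ha
        push_neg at ha
        obtain ⟨ha0, ha1, ham⟩ := ha
        refine ⟨⟨(hmemU2 a).2 ⟨ha0, ha1⟩, (hmemU2 _).2 ⟨?_, ?_⟩⟩, by ring⟩
        · simpa using ha0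
        · intro h; exact ham (by linear_combination -h)
    rw [himg, Finset.card_image_of_injective _ (fun a b h => (Prod.ext_iff.1 h).1), hcardU3]
  have hsplit : (B0 ∪ B1).card + T.card = R.card := by
    rw [hT, ← Finset.filter_or]
    exact Finset.card_filter_add_card_filter_not _
  have hdisj : Disjoint B0 B1 := by
    rw [Finset.disjoint_left]
    intro q h0 h1
    rw [hB0, Finset.mem_filter] at h0
    rw [hB1, Finset.mem_filter] at h1
    exact h01 (by rw [← h0.2, h1.2])
  have hunion : (B0 ∪ B1).card = (p - 3) + (p - 2) := by
    rw [Finset.card_union_of_disjoint hdisj, hB0card, hB1card]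
  have hTcard : T.card = (p - 3) ^ 2 := by
    have h1 : (p - 3) + (p - 2) + T.card = (p - 2) ^ 2 := by
      rw [← hunion, hsplit, hcardR]
    have h2 : p - 2 = (p - 3) + 1 := by omega
    rw [h2] at h1
    have h3 : ((p - 3) + 1) ^ 2 = (p-3)^2 + 2*(p-3) + 1 := by ring
    rw [h3] at h1
    generalize (p - 3)^2 = K at h1 ⊢
    omega
  -- injection from T into AF
  have hinj : T.card ≤ AF.card := by
    apply Finset.card_le_card_of_injOn (fun q => (l q.1, l q.2, l (1 - q.1 - q.2)))
    · intro q hq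
      rw [Finset.mem_coe, hT, Finset.mem_filter, hR, Finset.mem_product, hmemU2, hmemU2] at hq
      push_neg at hq
      obtain ⟨⟨⟨h10, h11⟩, ⟨h20, h21⟩⟩, hs0, hs1⟩ := hq
      have hw0 : 1 - q.1 - q.2 ≠ 0 := by
        intro h; exact hs1 (by linear_combination -h)
      have e1 := hl q.1 h10
      have e2 := hl q.2 h20
      have e3 := hl _ hw0
      rw [Finset.mem_coe, hAF, Finset.mem_filter]
      refine ⟨Finset.mem_univ _, ?_⟩
      rw [hS]
      refine ⟨?_, ?_, ?_, ?_⟩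
      · show e (l q.1) + e (l q.2) + e (l (1 - q.1 - q.2)) = 1
        rw [e1, e2, e3]; ring
      · intro h
        have h' : l q.1 = 0 := h
        apply h11
        rw [← e1, h']
        exact (he_one_iff 0).2 rfl
      · intro h
        have h' : l q.2 = 0 := h
        apply h21
        rw [← e2, h']
        exact (he_one_iff 0).2 rfl
      · intro h
        have h' : l (1 - q.1 - q.2) = 0 := h
        have hx : (1 : ZMod p) - q.1 - q.2 = 1 := by
          rw [← e3, h']; exact (he_one_iff 0).2 rfl
        exact hs0 (by linear_combination -hx)
    · intro q hq q' hq' h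
      rw [Finset.mem_coe] at hq hq'
      rw [hT, Finset.mem_filter, hR, Finset.mem_product, hmemU2, hmemU2] at hq hq'
      simp only [Prod.mk.injEq] at h
      obtain ⟨h1, h2, -⟩ := h
      refine Prod.ext ?_ ?_
      · rw [← hl _ hq.1.1.1, ← hl _ hq'.1.1.1, h1]
      · rw [← hl _ hq.1.2.1, ← hl _ hq'.1.2.1, h2]
  -- conclude
  have hfree : LFree 3 (fun _ => 2) (↑AF : Set G) := by
    rw [hAFcoe]
    exact lfreeA p hp hodd θ hθ
  have hmem : AF.card ∈ {k | ∃ A : Finset G, LFree 3 (fun _ => 2) (↑A : Set G) ∧ A.card = k} :=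
    ⟨AF, hfree, rfl⟩
  have hbdd : BddAbove {k | ∃ A : Finset G, LFree 3 (fun _ => 2) (↑A : Set G) ∧ A.card = k} := by
    refine ⟨Fintype.card G, ?_⟩
    rintro k ⟨A, _, rfl⟩
    exact Finset.card_le_univ A
  calc (p - 3)^2 = T.card := hTcard.symm
    _ ≤ AF.card := hinj
    _ ≤ _ := le_csSup hbdd hmem


/-- for an odd prime `p` and a generator `θ` of `F_p^*`, the set
`A = {(x₁,x₂,x₃) ∈ Z_{p−1}³ : θ^{x₁}+θ^{x₂}+θ^{x₃} = 1, x₁,x₂,x₃ ≠ 0}` contains no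
sumset `L₁ + L₂ + L₃` with `|Lᵢ| = 2`; in particular
`F(Z_{p−1}³, L^{(3)}_{2,2,2}) ≥ (p−3)²`. -/
theorem stmt9 (p : ℕ) (hp : p.Prime) (hodd : Odd p) (θ : ZMod p)
    (hθ : orderOf θ = p - 1) :
    LFree 3 (fun _ => 2)
      {x : ZMod (p - 1) × ZMod (p - 1) × ZMod (p - 1) |
        θ ^ x.1.val + θ ^ x.2.1.val + θ ^ x.2.2.val = 1 ∧
        x.1 ≠ 0 ∧ x.2.1 ≠ 0 ∧ x.2.2 ≠ 0} ∧
    (p - 3) ^ 2 ≤ Fgrp (ZMod (p - 1) × ZMod (p - 1) × ZMod (p - 1)) 3 (fun _ => 2) := by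
  exact ⟨lfreeA p hp hodd θ hθ, part2 p hp hodd θ hθ⟩
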